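/- Let 𝒜 be a central hyperplane arrangement in a finite-dimensional real vector space V and let g : Ch(𝒜) → Ch(𝒜) be a bijection satisfying IIA. If g has a fixed point (i.e. g(c) = c for some chamber c), then g is the identity map of Ch(𝒜). -/

import Mathlib

open Set

section Arrangement

variable {V : Type*} [NormedAddCommGroup V] [NormedSpace ℝ V]

/-- A (linear) hyperplane: the kernel of a nonzero linear functional. -/
def IsHyperplane (H : Submodule ℝ V) : Prop :=
  ∃ f : V →ₗ[ℝ] ℝ, f ≠ 0 ∧ LinearMap.ker f = H

/-- A central hyperplane arrangement: a finite set of linear hyperplanes. -/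
def IsCentralArrangement (𝒜 : Finset (Submodule ℝ V)) : Prop :=
  ∀ H ∈ 𝒜, IsHyperplane H

/-- The complement of the union of the hyperplanes of `𝒜`. -/
def arrComplement (𝒜 : Finset (Submodule ℝ V)) : Set V :=
  {x | ∀ H ∈ 𝒜, x ∉ H}

/-- The set of chambers of `𝒜`: connected components of the complement. -/
def Chambers (𝒜 : Finset (Submodule ℝ V)) : Set (Set V) :=
  {c | ∃ x ∈ arrComplement 𝒜, c = connectedComponentIn (arrComplement 𝒜) x}

/-- A chamber of `𝒜`. -/
abbrev Chamber (𝒜 : Finset (Submodule ℝ V)) := ↥(Chambers 𝒜)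

/-- A chosen point of a chamber. -/
noncomputable def Chamber.pt {𝒜 : Finset (Submodule ℝ V)} (c : Chamber 𝒜) : V :=
  c.2.choose

lemma Chamber.pt_mem {𝒜 : Finset (Submodule ℝ V)} (c : Chamber 𝒜) :
    c.pt ∈ arrComplement 𝒜 := c.2.choose_spec.1

/-- `ε_H` : the chamber of the one-hyperplane arrangement `{H}` containing a
given chamber of `𝒜` (for `H ∈ 𝒜`). -/
noncomputable def epsC {𝒜 : Finset (Submodule ℝ V)} (H : Submodule ℝ V) (hH : H ∈ 𝒜)
    (c : Chamber 𝒜) : Chamber ({H} : Finset (Submodule ℝ V)) :=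
  ⟨connectedComponentIn (arrComplement ({H} : Finset (Submodule ℝ V))) c.pt, by
    refine ⟨c.pt, ?_, rfl⟩
    intro H' hH'
    rw [Finset.mem_singleton] at hH'
    subst hH'
    exact c.pt_mem _ hH⟩

/-- IIA for a map `Ch(𝒜)^m → Ch(𝒜)^l`. -/
def SatisfiesIIA {𝒜 : Finset (Submodule ℝ V)} {m l : ℕ}
    (Φ : (Fin m → Chamber 𝒜) → (Fin l → Chamber 𝒜)) : Prop :=
  ∀ (H : Submodule ℝ V) (hH : H ∈ 𝒜),
    ∃ φ : (Fin m → Chamber ({H} : Finset (Submodule ℝ V))) →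
          (Fin l → Chamber ({H} : Finset (Submodule ℝ V))),
      ∀ c : Fin m → Chamber 𝒜,
        φ (fun i => epsC H hH (c i)) = fun j => epsC H hH (Φ c j)

/-- IIA for a map `Ch(𝒜)^m → Ch(𝒜)`. -/
def SatisfiesIIA1 {𝒜 : Finset (Submodule ℝ V)} {m : ℕ}
    (Φ : (Fin m → Chamber 𝒜) → Chamber 𝒜) : Prop :=
  ∀ (H : Submodule ℝ V) (hH : H ∈ 𝒜),
    ∃ φ : (Fin m → Chamber ({H} : Finset (Submodule ℝ V))) →
          Chamber ({H} : Finset (Submodule ℝ V)),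
      ∀ c : Fin m → Chamber 𝒜,
        φ (fun i => epsC H hH (c i)) = epsC H hH (Φ c)

/-- IIA for a map `Ch(𝒜) → Ch(𝒜)`. -/
def SatisfiesIIAone {𝒜 : Finset (Submodule ℝ V)}
    (f : Chamber 𝒜 → Chamber 𝒜) : Prop :=
  ∀ (H : Submodule ℝ V) (hH : H ∈ 𝒜),
    ∃ φ : Chamber ({H} : Finset (Submodule ℝ V)) → Chamber ({H} : Finset (Submodule ℝ V)),
      ∀ c : Chamber 𝒜, φ (epsC H hH c) = epsC H hH (f c)

/-- Pareto property. -/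
def SatisfiesPAR {𝒜 : Finset (Submodule ℝ V)} {m : ℕ}
    (Φ : (Fin m → Chamber 𝒜) → Chamber 𝒜) : Prop :=
  ∀ c : Chamber 𝒜, Φ (fun _ => c) = c

/-- Admissible map: IIA and PAR. -/
def Admissible {𝒜 : Finset (Submodule ℝ V)} {m : ℕ}
    (Φ : (Fin m → Chamber 𝒜) → Chamber 𝒜) : Prop :=
  SatisfiesIIA1 Φ ∧ SatisfiesPAR Φ

/-- The rank `r(𝒜) = dim V − dim ⋂_{H ∈ 𝒜} H`. -/
noncomputable def arrRank (𝒜 : Finset (Submodule ℝ V)) : ℕ :=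
  Module.finrank ℝ V - Module.finrank ℝ ↥(𝒜.inf id)

/-- Decomposability of a central arrangement. -/
def Decomposable (𝒜 : Finset (Submodule ℝ V)) : Prop :=
  ∃ (n : ℕ) (parts : Fin n → Finset (Submodule ℝ V)),
    2 ≤ n ∧
    (∀ i, (parts i).Nonempty) ∧
    (∀ i j H, H ∈ parts i → H ∈ parts j → i = j) ∧
    (∀ H, H ∈ 𝒜 ↔ ∃ i, H ∈ parts i) ∧
    arrRank 𝒜 = ∑ i, arrRank (parts i)

/-- A dependent subarrangement: `r(ℬ) < |ℬ|`. -/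
def Dependent (ℬ : Finset (Submodule ℝ V)) : Prop := arrRank ℬ < ℬ.card

/-- A circuit: a minimal dependent subarrangement. -/
def IsCircuit (ℬ : Finset (Submodule ℝ V)) : Prop :=
  Dependent ℬ ∧ ∀ ℬ' ⊆ ℬ, Dependent ℬ' → ℬ' = ℬ

/-- The graph `Γ(𝒜)`: vertices are the hyperplanes of `𝒜`, with an edge between two
distinct hyperplanes iff some circuit of `𝒜` contains both. -/
def circuitGraph (𝒜 : Finset (Submodule ℝ V)) : SimpleGraph {H // H ∈ 𝒜} where
  Adj H H' := H ≠ H' ∧ ∃ ℬ ⊆ 𝒜, IsCircuit ℬ ∧ H.1 ∈ ℬ ∧ H'.1 ∈ ℬ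
  symm := by
    refine ⟨?_⟩
    rintro a b ⟨hne, ℬ, hsub, hcirc, ha, hb⟩
    exact ⟨hne.symm, ℬ, hsub, hcirc, hb, ha⟩
  loopless := by
    refine ⟨?_⟩
    rintro a ⟨h, -⟩
    exact h rfl

/-- `H` separates a set `T ⊆ Ch(𝒜)^m` if the image of `T` under `(ε_H)^m` has at
least two elements. -/
def SeparationOf {𝒜 : Finset (Submodule ℝ V)} {m : ℕ} (H : Submodule ℝ V) (hH : H ∈ 𝒜)
    (T : Set (Fin m → Chamber 𝒜)) : Prop :=
  ∃ t₁ ∈ T, ∃ t₂ ∈ T,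
    (fun i => epsC H hH (t₁ i)) ≠ (fun i => epsC H hH (t₂ i))

end Arrangement

section AuxProof

variable {V : Type*} [NormedAddCommGroup V] [NormedSpace ℝ V] [FiniteDimensional ℝ V]

lemma comp_pos_eq (f : V →ₗ[ℝ] ℝ) (x : V) (hx : 0 < f x) :
    connectedComponentIn {z | f z ≠ 0} x = {z | 0 < f z} := by
  have hcont : Continuous f := f.continuous_of_finiteDimensional
  have hPS : {z : V | 0 < f z} ⊆ {z | f z ≠ 0} := fun z hz => ne_of_gt hz
  have hPconv : Convex ℝ {z : V | 0 < f z} := (convex_Ioi (0:ℝ)).linear_preimage f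
  have hPo : IsOpen {z : V | 0 < f z} := isOpen_lt continuous_const hcont
  have hNo : IsOpen {z : V | f z < 0} := isOpen_lt hcont continuous_const
  have hxS : x ∈ {z : V | f z ≠ 0} := ne_of_gt hx
  apply Set.Subset.antisymm
  · refine IsPreconnected.subset_left_of_subset_union hPo hNo ?_ ?_ ?_
      (isPreconnected_connectedComponentIn)
    · exact Set.disjoint_left.mpr fun z (hz : 0 < f z) (hz' : f z < 0) => absurd hz (not_lt.mpr hz'.le)
    · refine (connectedComponentIn_subset _ _).trans fun z hz => ?_
      rcases lt_or_gt_of_ne (hz : f z ≠ 0) with h | h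
      · exact Or.inr h
      · exact Or.inl h
    · exact ⟨x, mem_connectedComponentIn hxS, hx⟩
  · exact hPconv.isPreconnected.subset_connectedComponentIn hx hPS

lemma comp_neg_eq (f : V →ₗ[ℝ] ℝ) (x : V) (hx : f x < 0) :
    connectedComponentIn {z | f z ≠ 0} x = {z | f z < 0} := by
  have h := comp_pos_eq (-f) x (by simpa using hx)
  have h1 : {z : V | (-f) z ≠ 0} = {z : V | f z ≠ 0} := by
    ext z; simp
  have h2 : {z : V | 0 < (-f) z} = {z : V | f z < 0} := by
    ext z; simp
  rw [h1, h2] at h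
  exact h

lemma comp_eq_comp_iff (f : V →ₗ[ℝ] ℝ) (x y : V) (hx : f x ≠ 0) (hy : f y ≠ 0) :
    connectedComponentIn {z | f z ≠ 0} x = connectedComponentIn {z | f z ≠ 0} y ↔
      (0 < f x ↔ 0 < f y) := by
  constructor
  · intro h
    constructor
    · intro hxp
      have hyc : y ∈ connectedComponentIn {z : V | f z ≠ 0} y :=
        mem_connectedComponentIn hy
      rw [← h, comp_pos_eq f x hxp] at hyc
      exact hyc
    · intro hyp
      have hxc : x ∈ connectedComponentIn {z : V | f z ≠ 0} x :=
        mem_connectedComponentIn hx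
      rw [h, comp_pos_eq f y hyp] at hxc
      exact hxc
  · intro hiff
    rcases lt_or_gt_of_ne hx with h | h
    · have hy' : f y < 0 := by
        rcases lt_or_gt_of_ne hy with h' | h'
        · exact h'
        · exact absurd (hiff.mpr h') (not_lt.mpr h.le)
      rw [comp_neg_eq f x h, comp_neg_eq f y hy']
    · have hy' : 0 < f y := hiff.mp h
      rw [comp_pos_eq f x h, comp_pos_eq f y hy']

lemma arrComplement_singleton (H : Submodule ℝ V) (f : V →ₗ[ℝ] ℝ)
    (hker : LinearMap.ker f = H) :
    arrComplement ({H} : Finset (Submodule ℝ V)) = {z | f z ≠ 0} := by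
  ext z
  simp only [arrComplement, Set.mem_setOf_eq, Finset.mem_singleton]
  constructor
  · intro h hz
    exact h H rfl (by rw [← hker]; exact LinearMap.mem_ker.mpr hz)
  · intro h H' hH'
    subst hH'
    rw [← hker]
    exact fun hmem => h (LinearMap.mem_ker.mp hmem)

lemma pt_not_zero {𝒜 : Finset (Submodule ℝ V)} {H : Submodule ℝ V} (hH : H ∈ 𝒜)
    (f : V →ₗ[ℝ] ℝ) (hker : LinearMap.ker f = H) (c : Chamber 𝒜) : f c.pt ≠ 0 := by
  intro h
  exact c.pt_mem H hH (by rw [← hker]; exact LinearMap.mem_ker.mpr h)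

lemma eps_eq_iff {𝒜 : Finset (Submodule ℝ V)} {H : Submodule ℝ V} (hH : H ∈ 𝒜)
    (f : V →ₗ[ℝ] ℝ) (hker : LinearMap.ker f = H) (c c' : Chamber 𝒜) :
    epsC H hH c = epsC H hH c' ↔ (0 < f c.pt ↔ 0 < f c'.pt) := by
  have h1 : (epsC H hH c).1 = connectedComponentIn (arrComplement ({H} : Finset (Submodule ℝ V))) c.pt := rfl
  have h2 : (epsC H hH c').1 = connectedComponentIn (arrComplement ({H} : Finset (Submodule ℝ V))) c'.pt := rfl
  rw [Subtype.ext_iff, h1, h2, arrComplement_singleton H f hker]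
  exact comp_eq_comp_iff f c.pt c'.pt (pt_not_zero hH f hker c) (pt_not_zero hH f hker c')

end AuxProof

/-- A bijection `g : Ch(𝒜) → Ch(𝒜)` satisfying IIA which has a fixed point is
the identity. -/
theorem bijective_IIA_fixed_point_eq_id
    {V : Type*} [NormedAddCommGroup V] [NormedSpace ℝ V] [FiniteDimensional ℝ V]
    (𝒜 : Finset (Submodule ℝ V)) (h𝒜 : IsCentralArrangement 𝒜)
    (g : Chamber 𝒜 → Chamber 𝒜) (hbij : Function.Bijective g)
    (hIIA : SatisfiesIIAone g) (hfix : ∃ c : Chamber 𝒜, g c = c) :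
    g = id := by
  obtain ⟨c₀, hc₀⟩ := hfix
  have key : ∀ (H : Submodule ℝ V) (hH : H ∈ 𝒜) (c : Chamber 𝒜),
      epsC H hH (g c) = epsC H hH c := by
    intro H hH c
    obtain ⟨f, hf, hker⟩ := h𝒜 H hH
    obtain ⟨φ, hφ⟩ := hIIA H hH
    by_cases h1 : epsC H hH c = epsC H hH c₀
    · calc epsC H hH (g c) = φ (epsC H hH c) := (hφ c).symm
        _ = φ (epsC H hH c₀) := by rw [h1]
        _ = epsC H hH (g c₀) := hφ c₀
        _ = epsC H hH c₀ := by rw [hc₀]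
        _ = epsC H hH c := h1.symm
    · by_contra hne
      obtain ⟨c', hc'⟩ := hbij.2 c
      by_cases h2 : epsC H hH c' = epsC H hH c₀
      · have : epsC H hH c = epsC H hH c₀ := by
          calc epsC H hH c = epsC H hH (g c') := by rw [hc']
            _ = φ (epsC H hH c') := (hφ c').symm
            _ = φ (epsC H hH c₀) := by rw [h2]
            _ = epsC H hH (g c₀) := hφ c₀
            _ = epsC H hH c₀ := by rw [hc₀]
        exact h1 this
      · have h3 : epsC H hH c' = epsC H hH c := by
          rw [eps_eq_iff hH f hker] at h1 h2 ⊢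
          tauto
        have : epsC H hH c = epsC H hH (g c) := by
          calc epsC H hH c = epsC H hH (g c') := by rw [hc']
            _ = φ (epsC H hH c') := (hφ c').symm
            _ = φ (epsC H hH c) := by rw [h3]
            _ = epsC H hH (g c) := hφ c
        exact hne this.symm
  funext c
  simp only [id_eq]
  set x := (g c).pt with hxdef
  set y := c.pt with hydef
  have hxmem : x ∈ arrComplement 𝒜 := (g c).pt_mem
  have hymem : y ∈ arrComplement 𝒜 := c.pt_mem
  have hseg : segment ℝ x y ⊆ arrComplement 𝒜 := by
    intro z hz H hH
    obtain ⟨f, hf, hker⟩ := h𝒜 H hH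
    have hsign : (0 < f x ↔ 0 < f y) :=
      (eps_eq_iff hH f hker (g c) c).mp (key H hH c)
    have hx0 : f x ≠ 0 := pt_not_zero hH f hker (g c)
    have hy0 : f y ≠ 0 := pt_not_zero hH f hker c
    have hz0 : f z ≠ 0 := by
      rcases lt_or_gt_of_ne hx0 with h | h
      · have hy' : f y < 0 := by
          rcases lt_or_gt_of_ne hy0 with h' | h'
          · exact h'
          · exact absurd (hsign.mpr h') (not_lt.mpr h.le)
        have hconv : Convex ℝ {w : V | f w < 0} := (convex_Iio (0:ℝ)).linear_preimage f
        exact ne_of_lt (hconv.segment_subset h hy' hz)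
      · have hy' : 0 < f y := hsign.mp h
        have hconv : Convex ℝ {w : V | 0 < f w} := (convex_Ioi (0:ℝ)).linear_preimage f
        exact ne_of_gt (hconv.segment_subset h hy' hz)
    intro hmem
    exact hz0 (by rw [← hker] at hmem; exact LinearMap.mem_ker.mp hmem)
  have hy_in : y ∈ connectedComponentIn (arrComplement 𝒜) x :=
    (convex_segment x y).isPreconnected.subset_connectedComponentIn
      (left_mem_segment ℝ x y) hseg (right_mem_segment ℝ x y)
  have hcomp : connectedComponentIn (arrComplement 𝒜) x
      = connectedComponentIn (arrComplement 𝒜) y := connectedComponentIn_eq hy_in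
  apply Subtype.ext
  have h1 : (g c).1 = connectedComponentIn (arrComplement 𝒜) x := (g c).2.choose_spec.2
  have h2 : c.1 = connectedComponentIn (arrComplement 𝒜) y := c.2.choose_spec.2
  rw [h1, h2, hcomp]
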